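/- Let G be a topological group and let (U_n)_{n ∈ ℤ} be a family of open, symmetric identity neighborhoods of G (so 1 ∈ U_n, U_n is open, and g ∈ U_n iff g⁻¹ ∈ U_n) such that U_n · U_n · U_n ⊆ U_{n+1} for every n ∈ ℤ and ⋃_{n ∈ ℤ} U_n = G. Define ‖g‖ = inf{2^n : n ∈ ℤ, g ∈ U_n} and d(g,h) = inf{‖x_0⁻¹x_1‖ + ⋯ + ‖x_{n-1}⁻¹x_n‖ : n ∈ ℕ, x_0, …, x_n ∈ G, x_0 = g, x_n = h}. Then d is a continuous, left-invariant pseudometric on G and satisfies (1/2)·‖g⁻¹h‖ ≤ d(g,h) ≤ ‖g⁻¹h‖ for all g, h ∈ G. -/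

import Mathlib

open Pointwise

/-- A continuous, left-invariant pseudometric on a topological group `G`. -/
structure IsContLeftInvPseudometric (G : Type*) [Group G] [TopologicalSpace G]
    (d : G → G → ℝ) : Prop where
  continuous : Continuous fun p : G × G => d p.1 p.2
  self : ∀ x : G, d x x = 0
  symm : ∀ x y : G, d x y = d y x
  nonneg : ∀ x y : G, 0 ≤ d x y
  triangle : ∀ x y z : G, d x z ≤ d x y + d y z
  left_inv : ∀ g x y : G, d (g * x) (g * y) = d x y

/-- A subset `A` of a topological group `G` is coarsely bounded in `G` if it has
finite diameter with respect to every continuous left-invariant pseudometric on `G`. -/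
def IsCoarselyBounded (G : Type*) [Group G] [TopologicalSpace G] (A : Set G) : Prop :=
  ∀ d : G → G → ℝ, IsContLeftInvPseudometric G d →
    ∃ M : ℝ, ∀ a ∈ A, ∀ b ∈ A, d a b ≤ M

/-- The word length of `g` with respect to a generating set `S`: the least `n` such
that `g` is a product of `n` elements of `S`. -/
noncomputable def wordLength {G : Type*} [Group G] (S : Set G) (g : G) : ℕ :=
  sInf {n : ℕ | ∃ l : List G, l.length = n ∧ (∀ s ∈ l, s ∈ S) ∧ l.prod = g}

/-- `G` admits a geometry if there is a continuous left-invariant pseudometric on `G`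
which dominates, in the coarse Lipschitz sense, every continuous left-invariant
pseudometric on `G`. -/
def AdmitsAGeometry (G : Type*) [Group G] [TopologicalSpace G] : Prop :=
  ∃ d : G → G → ℝ, IsContLeftInvPseudometric G d ∧
    ∀ d' : G → G → ℝ, IsContLeftInvPseudometric G d' →
      ∃ L K : ℝ, 0 < L ∧ 0 ≤ K ∧ ∀ g h : G, d' g h ≤ L * d g h + K

set_option linter.unusedSectionVars false
set_option linter.unusedVariables false
set_option maxHeartbeats 1000000

section BirkhoffAux

open Classical

variable {G : Type*} [Group G] (U : ℤ → Set G) (norm : G → ℝ)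

lemma bk_mono (hone : ∀ n, (1 : G) ∈ U n)
    (hcube : ∀ n, ∀ u ∈ U n, ∀ v ∈ U n, ∀ w ∈ U n, u * v * w ∈ U (n + 1)) :
    ∀ {m n : ℤ}, m ≤ n → U m ⊆ U n := by
  have key : ∀ (k : ℕ) (m : ℤ), U m ⊆ U (m + k) := by
    intro k
    induction k with
    | zero => simp
    | succ k ih =>
      intro m g hg
      have := hcube (m + k) g (ih m hg) 1 (hone _) 1 (hone _)
      have e : (m + k) + 1 = m + (k + 1 : ℕ) := by push_cast; ring
      rw [e] at this
      simpa using this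
  intro m n hmn
  have : n = m + ((n - m).toNat : ℤ) := by omega
  rw [this]
  exact key _ m

lemma bk_norm_nonneg (hunion : ∀ g : G, ∃ n, g ∈ U n)
    (hnorm : ∀ g : G, norm g = sInf {r : ℝ | ∃ n : ℤ, g ∈ U n ∧ r = 2 ^ n}) (g : G) :
    0 ≤ norm g := by
  rw [hnorm]
  apply Real.sInf_nonneg
  rintro r ⟨n, -, rfl⟩
  positivity

lemma bk_bdd (g : G) : BddBelow {r : ℝ | ∃ n : ℤ, g ∈ U n ∧ r = 2 ^ n} := by
  refine ⟨0, ?_⟩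
  rintro r ⟨n, -, rfl⟩
  positivity

lemma bk_norm_le (hnorm : ∀ g : G, norm g = sInf {r : ℝ | ∃ n : ℤ, g ∈ U n ∧ r = 2 ^ n})
    {g : G} {n : ℤ} (hg : g ∈ U n) : norm g ≤ 2 ^ n := by
  rw [hnorm]
  exact csInf_le (bk_bdd U g) ⟨n, hg, rfl⟩

lemma bk_mem_of_lt (hone : ∀ n, (1 : G) ∈ U n)
    (hcube : ∀ n, ∀ u ∈ U n, ∀ v ∈ U n, ∀ w ∈ U n, u * v * w ∈ U (n + 1))
    (hunion : ∀ g : G, ∃ n, g ∈ U n)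
    (hnorm : ∀ g : G, norm g = sInf {r : ℝ | ∃ n : ℤ, g ∈ U n ∧ r = 2 ^ n})
    {g : G} {n : ℤ} (hg : norm g < 2 ^ n) : g ∈ U (n - 1) := by
  rw [hnorm] at hg
  obtain ⟨m, hm⟩ := hunion g
  have hne : {r : ℝ | ∃ n : ℤ, g ∈ U n ∧ r = 2 ^ n}.Nonempty := ⟨2 ^ m, m, hm, rfl⟩
  obtain ⟨r, ⟨k, hk, rfl⟩, hr⟩ := exists_lt_of_csInf_lt hne hg
  have hkn : k < n := by
    by_contra h
    push_neg at h
    exact absurd hr (not_lt.2 (zpow_le_zpow_right₀ one_le_two h))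
  exact bk_mono U hone hcube (by omega) hk

lemma bk_chain (hone : ∀ n, (1 : G) ∈ U n)
    (hcube : ∀ n, ∀ u ∈ U n, ∀ v ∈ U n, ∀ w ∈ U n, u * v * w ∈ U (n + 1))
    (hmono : ∀ {m n : ℤ}, m ≤ n → U m ⊆ U n)
    (hnn : ∀ g : G, 0 ≤ norm g)
    (hmem : ∀ {g : G} {n : ℤ}, norm g < 2 ^ n → g ∈ U (n - 1)) :
    ∀ (k : ℕ) (n : ℤ) (x : ℕ → G),
      (∑ i ∈ Finset.range k, norm ((x i)⁻¹ * x (i + 1))) < 2 ^ n →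
      (x 0)⁻¹ * x k ∈ U n := by
  intro k
  induction k using Nat.strong_induction_on with
  | _ k IH =>
    intro n x hsum
    rcases Nat.eq_zero_or_pos k with rfl | hk
    · simpa using hone n
    set f : ℕ → ℝ := fun i => norm ((x i)⁻¹ * x (i + 1)) with hf
    set S : ℝ := ∑ i ∈ Finset.range k, f i with hS
    have hS0 : 0 ≤ S := Finset.sum_nonneg fun i _ => hnn _
    have hterm : ∀ i ∈ Finset.range k, f i ≤ S :=
      fun i hi => Finset.single_le_sum (f := f) (fun j _ => hnn _) hi
    set j : ℕ := Nat.findGreatest (fun j => ∑ i ∈ Finset.range j, f i ≤ S / 2) (k - 1) with hj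
    have hP0 : (∑ i ∈ Finset.range 0, f i) ≤ S / 2 := by simpa using by linarith
    have hjle : j ≤ k - 1 := Nat.findGreatest_le _
    have hjlt : j < k := by omega
    have hP : (∑ i ∈ Finset.range j, f i) ≤ S / 2 :=
      Nat.findGreatest_spec (P := fun j => ∑ i ∈ Finset.range j, f i ≤ S / 2)
        (Nat.zero_le _) hP0
    -- split S
    have hsplit : S = (∑ i ∈ Finset.range j, f i) + f j
        + ∑ i ∈ Finset.range (k - (j + 1)), f (j + 1 + i) := by
      have e : k = (j + 1) + (k - (j + 1)) := by omega
      rw [hS]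
      conv_lhs => rw [e]
      rw [Finset.sum_range_add, Finset.sum_range_succ]
    have hQ : (∑ i ∈ Finset.range (k - (j + 1)), f (j + 1 + i)) ≤ S / 2 := by
      rcases Nat.lt_or_ge j (k - 1) with hjk | hjk
      · have hnP : ¬ (∑ i ∈ Finset.range (j + 1), f i) ≤ S / 2 :=
          Nat.findGreatest_is_greatest (P := fun j => ∑ i ∈ Finset.range j, f i ≤ S / 2)
            (k := j + 1) (n := k - 1) (by omega) (by omega)
        push_neg at hnP
        rw [Finset.sum_range_succ] at hnP
        linarith [hsplit]
      · have : j = k - 1 := le_antisymm hjle hjk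
        have : k - (j + 1) = 0 := by omega
        rw [this]
        simpa using by linarith
    have h2 : (2:ℝ) ^ n = 2 * 2 ^ (n - 1) := by
      rw [show n = (n - 1) + 1 by ring, zpow_add_one₀ (by norm_num : (2:ℝ) ≠ 0)]
      ring_nf
    have hhalf : S / 2 < 2 ^ (n - 1) := by
      rw [h2] at hsum; linarith
    -- prefix
    have hpre : (x 0)⁻¹ * x j ∈ U (n - 1) :=
      IH j hjlt (n - 1) x (lt_of_le_of_lt hP hhalf)
    -- middle
    have hmid : (x j)⁻¹ * x (j + 1) ∈ U (n - 1) := by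
      have : f j < 2 ^ n := lt_of_le_of_lt (hterm j (Finset.mem_range.2 hjlt)) hsum
      exact hmem this
    -- suffix
    have hsuf : (x (j + 1))⁻¹ * x k ∈ U (n - 1) := by
      have := IH (k - (j + 1)) (by omega) (n - 1) (fun i => x (j + 1 + i))
        (by
          refine lt_of_le_of_lt ?_ hhalf
          refine le_of_eq_of_le ?_ hQ
          refine Finset.sum_congr rfl fun i _ => ?_
          simp [hf, Nat.add_assoc])
      simpa [show j + 1 + (k - (j + 1)) = k by omega] using this
    have := hcube (n - 1) _ hpre _ hmid _ hsuf
    have e : n - 1 + 1 = n := by ring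
    rw [e] at this
    convert this using 1
    group

/-- The set of chain sums from `g` to `h`. -/
def bkS (g h : G) : Set ℝ :=
  {r : ℝ | ∃ (n : ℕ) (x : ℕ → G), x 0 = g ∧ x n = h ∧
      r = ∑ i ∈ Finset.range n, norm ((x i)⁻¹ * x (i + 1))}

lemma bkS_nonneg (hnn : ∀ g : G, 0 ≤ norm g) {g h : G} {r : ℝ} (hr : r ∈ bkS norm g h) :
    0 ≤ r := by
  obtain ⟨n, x, -, -, rfl⟩ := hr
  exact Finset.sum_nonneg fun i _ => hnn _

lemma bkS_bdd (hnn : ∀ g : G, 0 ≤ norm g) (g h : G) : BddBelow (bkS norm g h) :=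
  ⟨0, fun r hr => bkS_nonneg norm hnn hr⟩

lemma bkS_one_step (g h : G) : norm (g⁻¹ * h) ∈ bkS norm g h := by
  refine ⟨1, fun i => if i = 0 then g else h, by simp, by simp, by simp⟩

lemma bkS_nonempty (g h : G) : (bkS norm g h).Nonempty := ⟨_, bkS_one_step norm g h⟩

lemma bkS_rev (hns : ∀ g : G, norm g⁻¹ = norm g) (g h : G) :
    bkS norm g h ⊆ bkS norm h g := by
  rintro r ⟨n, x, h0, hn, rfl⟩
  refine ⟨n, fun i => x (n - i), by simp [hn], by simp [h0], ?_⟩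
  rw [← Finset.sum_range_reflect]
  refine Finset.sum_congr rfl fun i hi => ?_
  have hi' := Finset.mem_range.1 hi
  have e3 : n - i = n - 1 - i + 1 := by omega
  have e4 : n - (i + 1) = n - 1 - i := by omega
  simp only
  rw [e3, e4, ← hns ((x (n - 1 - i))⁻¹ * x (n - 1 - i + 1))]
  simp [mul_inv_rev]

lemma bkS_concat (g h k : G) {r₁ r₂ : ℝ} (h₁ : r₁ ∈ bkS norm g h) (h₂ : r₂ ∈ bkS norm h k) :
    r₁ + r₂ ∈ bkS norm g k := by
  obtain ⟨n, x, hx0, hxn, rfl⟩ := h₁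
  obtain ⟨m, y, hy0, hym, rfl⟩ := h₂
  refine ⟨n + m, fun i => if i ≤ n then x i else y (i - n), ?_, ?_, ?_⟩
  · simp [hx0]
  · rcases Nat.eq_zero_or_pos m with rfl | hm
    · simpa [hxn, hy0] using hy0.symm ▸ hym
    · simp [Nat.not_le.2 (by omega : n < n + m), hym]
  · have hw : ∀ i, (fun i => if i ≤ n then x i else y (i - n)) (n + i) = y i := by
      intro i
      rcases Nat.eq_zero_or_pos i with rfl | hi
      · simp [hxn, hy0]
      · simp [Nat.not_le.2 (by omega : n < n + i)]
    rw [Finset.sum_range_add]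
    congr 1
    · refine Finset.sum_congr rfl fun i hi => ?_
      have hi' := Finset.mem_range.1 hi
      simp [hi'.le, show i + 1 ≤ n from hi']
    · refine Finset.sum_congr rfl fun i hi => ?_
      rw [show n + i + 1 = n + (i + 1) by ring, hw i, hw (i + 1)]

lemma bkS_left (g a b : G) : ∀ r, r ∈ bkS norm a b → r ∈ bkS norm (g * a) (g * b) := by
  rintro r ⟨n, x, h0, hn, rfl⟩
  refine ⟨n, fun i => g * x i, by simp [h0], by simp [hn], ?_⟩
  refine Finset.sum_congr rfl fun i hi => ?_
  simp [mul_assoc, mul_inv_rev]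

end BirkhoffAux

/-- Birkhoff's lemma: the pseudometric built from a chain of symmetric identity
neighborhoods `U n` with `U n * U n * U n ⊆ U (n+1)` exhausting `G` is a continuous
left-invariant pseudometric comparable with the associated norm. -/
theorem birkhoff_pseudometric {G : Type*} [Group G] [TopologicalSpace G] [IsTopologicalGroup G]
    (U : ℤ → Set G)
    (hopen : ∀ n, IsOpen (U n))
    (hone : ∀ n, (1 : G) ∈ U n)
    (hsymm : ∀ n, ∀ g : G, g ∈ U n ↔ g⁻¹ ∈ U n)
    (hcube : ∀ n, ∀ u ∈ U n, ∀ v ∈ U n, ∀ w ∈ U n, u * v * w ∈ U (n + 1))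
    (hunion : ∀ g : G, ∃ n, g ∈ U n)
    (norm : G → ℝ)
    (hnorm : ∀ g : G, norm g = sInf {r : ℝ | ∃ n : ℤ, g ∈ U n ∧ r = 2 ^ n})
    (d : G → G → ℝ)
    (hd : ∀ g h : G, d g h = sInf {r : ℝ |
      ∃ (n : ℕ) (x : ℕ → G), x 0 = g ∧ x n = h ∧
        r = ∑ i ∈ Finset.range n, norm ((x i)⁻¹ * x (i + 1))}) :
    IsContLeftInvPseudometric G d ∧
      ∀ g h : G, (1 / 2) * norm (g⁻¹ * h) ≤ d g h ∧ d g h ≤ norm (g⁻¹ * h) := by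
  have hnn : ∀ g : G, 0 ≤ norm g := bk_norm_nonneg U norm hunion hnorm
  have hmono : ∀ {m n : ℤ}, m ≤ n → U m ⊆ U n := fun h => bk_mono U hone hcube h
  have hmem : ∀ {g : G} {n : ℤ}, norm g < 2 ^ n → g ∈ U (n - 1) :=
    fun h => bk_mem_of_lt U norm hone hcube hunion hnorm h
  have hns : ∀ g : G, norm g⁻¹ = norm g := by
    intro g
    rw [hnorm, hnorm]
    congr 1
    ext r
    constructor <;> rintro ⟨n, hn, rfl⟩
    · exact ⟨n, (hsymm n g).mpr hn, rfl⟩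
    · exact ⟨n, by simpa using (hsymm n g).mp hn, rfl⟩
  have hdS : ∀ g h : G, d g h = sInf (bkS norm g h) := hd
  have hle : ∀ g h : G, d g h ≤ norm (g⁻¹ * h) := fun g h => by
    rw [hdS]
    exact csInf_le (bkS_bdd norm hnn g h) (bkS_one_step norm g h)
  have hd0 : ∀ g h : G, 0 ≤ d g h := fun g h => by
    rw [hdS]
    exact le_csInf (bkS_nonempty norm g h) fun r hr => bkS_nonneg norm hnn hr
  have hself : ∀ g : G, d g g = 0 := by
    intro g
    refine le_antisymm ?_ (hd0 g g)
    rw [hdS]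
    exact csInf_le (bkS_bdd norm hnn g g) ⟨0, fun _ => g, rfl, rfl, by simp⟩
  have hsymmd : ∀ g h : G, d g h = d h g := by
    intro g h
    rw [hdS, hdS]
    congr 1
    exact subset_antisymm (bkS_rev norm hns g h) (bkS_rev norm hns h g)
  have htri : ∀ x y z : G, d x z ≤ d x y + d y z := by
    intro x y z
    rw [hdS x z, hdS x y, hdS y z]
    rw [← sub_le_iff_le_add']
    refine le_csInf (bkS_nonempty norm y z) fun r₂ h₂ => ?_
    rw [sub_le_iff_le_add', add_comm, ← sub_le_iff_le_add']
    refine le_csInf (bkS_nonempty norm x y) fun r₁ h₁ => ?_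
    rw [sub_le_iff_le_add', add_comm]
    exact csInf_le (bkS_bdd norm hnn x z) (bkS_concat norm x y z h₁ h₂)
  have hlinv : ∀ g x y : G, d (g * x) (g * y) = d x y := by
    intro g x y
    rw [hdS, hdS]
    congr 1
    ext r
    constructor
    · intro hr
      have := bkS_left norm g⁻¹ (g * x) (g * y) r hr
      simpa [inv_mul_cancel_left] using this
    · exact bkS_left norm g x y r
  have hlow : ∀ g h : G, (1 / 2) * norm (g⁻¹ * h) ≤ d g h := by
    intro g h
    rw [hdS]
    refine le_csInf (bkS_nonempty norm g h) ?_
    rintro r ⟨n, x, h0, hn, rfl⟩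
    set r := ∑ i ∈ Finset.range n, norm ((x i)⁻¹ * x (i + 1)) with hr
    have key : ∀ m : ℤ, r < 2 ^ m → norm (g⁻¹ * h) ≤ 2 ^ m := by
      intro m hm
      have := bk_chain U norm hone hcube (fun h => hmono h) hnn (fun h => hmem h) n m x hm
      rw [h0, hn] at this
      exact bk_norm_le U norm hnorm this
    have hr0 : 0 ≤ r := Finset.sum_nonneg fun i _ => hnn _
    rcases eq_or_lt_of_le hr0 with hz | hpos
    · have hN : norm (g⁻¹ * h) ≤ 0 := by
        by_contra hc
        push_neg at hc
        obtain ⟨k, hk⟩ := exists_pow_lt_of_lt_one hc (by norm_num : (1 : ℝ) / 2 < 1)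
        have h2 : ((1 : ℝ) / 2) ^ k = (2 : ℝ) ^ (-(k : ℤ)) := by
          rw [zpow_neg, zpow_natCast, one_div, inv_pow]
        have hlt : r < (2 : ℝ) ^ (-(k : ℤ)) := by
          rw [← hz, ← h2]
          positivity
        have := key _ hlt
        rw [← h2] at this
        linarith
      linarith
    · obtain ⟨m, hm1, hm2⟩ := exists_mem_Ico_zpow hpos one_lt_two
      have hk := key (m + 1) hm2
      have h2 : (2 : ℝ) ^ (m + 1) = 2 * 2 ^ m := by
        rw [zpow_add_one₀ (by norm_num : (2 : ℝ) ≠ 0)]; ring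
      rw [h2] at hk
      linarith
  have hcont : Continuous fun p : G × G => d p.1 p.2 := by
    rw [continuous_iff_continuousAt]
    rintro ⟨g, h⟩
    rw [ContinuousAt, Metric.tendsto_nhds]
    intro ε hε
    obtain ⟨k, hk⟩ := exists_pow_lt_of_lt_one (by linarith : (0 : ℝ) < ε / 2)
      (by norm_num : (1 : ℝ) / 2 < 1)
    have h2n : (2 : ℝ) ^ (-(k : ℤ)) < ε / 2 := by
      rw [zpow_neg, zpow_natCast]
      simpa [one_div, inv_pow] using hk
    set n : ℤ := -(k : ℤ)
    have hV : (g • U n) ×ˢ (h • U n) ∈ nhds (g, h) := by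
      refine prod_mem_nhds ?_ ?_
      · exact ((hopen n).smul g).mem_nhds ⟨1, hone n, by simp⟩
      · exact ((hopen n).smul h).mem_nhds ⟨1, hone n, by simp⟩
    filter_upwards [hV] with p hp
    obtain ⟨hp1, hp2⟩ := hp
    have hg1 : g⁻¹ * p.1 ∈ U n := by
      have := Set.mem_smul_set_iff_inv_smul_mem.1 hp1
      simpa [smul_eq_mul] using this
    have hh2 : h⁻¹ * p.2 ∈ U n := by
      have := Set.mem_smul_set_iff_inv_smul_mem.1 hp2
      simpa [smul_eq_mul] using this
    have hb1 : d g p.1 ≤ 2 ^ n := (hle g p.1).trans (bk_norm_le U norm hnorm hg1)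
    have hb2 : d h p.2 ≤ 2 ^ n := (hle h p.2).trans (bk_norm_le U norm hnorm hh2)
    have t1 : d p.1 p.2 ≤ d g p.1 + d g h + d h p.2 := by
      have := htri p.1 g p.2
      have := htri g h p.2
      rw [hsymmd p.1 g] at *
      linarith [htri p.1 g p.2, htri g h p.2, hsymmd p.1 g]
    have t2 : d g h ≤ d g p.1 + d p.1 p.2 + d h p.2 := by
      linarith [htri g p.1 h, htri p.1 p.2 h, hsymmd p.2 h]
    rw [Real.dist_eq, abs_sub_lt_iff]
    constructor <;> linarith
  exact ⟨⟨hcont, hself, hsymmd, hd0, htri, hlinv⟩, fun g h => ⟨hlow g h, hle g h⟩⟩
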